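/- Let L be a Leibniz algebra over a field F in which every subalgebra is a quasi-ideal, with I ≠ 0, and suppose L/I is almost abelian: there exist an ideal B of L with I ⊆ B and B ≠ I, [B,B] ⊆ I, and an element h ∈ L \ B with L = B + Fh and [b,h] - b ∈ I for all b ∈ B. Then: (i) I ⊆ Z(L); and (ii) F has characteristic 2 and contains an element that is not a square, Z(L) = Fz is one-dimensional, and L = C ∔ Fz ∔ Fh (vector-space direct sum) where for all c, c' ∈ C: [c,c'] = [c',c] ∈ Fz; [c,c] = λ_c z with λ_c ∈ F not a square in F (for c ≠ 0); [c,h] = [h,c] = c; and [h,h] = z. -/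
import Mathlib


/-! Basic definitions for (right) Leibniz algebras given by a bilinear bracket
on a vector space, following Towers, "Quasi-ideals of Leibniz algebras". -/

section LeibnizDefs

variable {F L : Type*} [Field F] [AddCommGroup L] [Module F L]

/-- The (right) Leibniz identity for a bilinear bracket `b`:
`[x,[y,z]] = [[x,y],z] - [[x,z],y]`. -/
def IsLeibniz (b : L →ₗ[F] L →ₗ[F] L) : Prop :=
  ∀ x y z : L, b x (b y z) = b (b x y) z - b (b x z) y

/-- `[A,C]`: the span of all brackets `[a,c]` with `a ∈ A`, `c ∈ C`. -/
def bspan (b : L →ₗ[F] L →ₗ[F] L) (A C : Submodule F L) : Submodule F L :=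
  Submodule.span F {z : L | ∃ a ∈ A, ∃ c ∈ C, z = b a c}

/-- A subalgebra is a subspace `H` with `[H,H] ⊆ H`. -/
def IsSubalgebra (b : L →ₗ[F] L →ₗ[F] L) (H : Submodule F L) : Prop :=
  bspan b H H ≤ H

/-- An ideal is a subspace `A` with `[A,L] + [L,A] ⊆ A`. -/
def IsIdeal (b : L →ₗ[F] L →ₗ[F] L) (A : Submodule F L) : Prop :=
  bspan b A ⊤ ⊔ bspan b ⊤ A ≤ A

/-- A quasi-ideal of `L` is a subspace `H` with `[H,K] + [K,H] ⊆ H + K`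
for every subspace `K` of `L`. -/
def IsQuasiIdeal (b : L →ₗ[F] L →ₗ[F] L) (H : Submodule F L) : Prop :=
  ∀ K : Submodule F L, bspan b H K ⊔ bspan b K H ≤ H ⊔ K

/-- `H` is a quasi-ideal of the subalgebra `E`: `H ⊆ E` and
`[H,K] + [K,H] ⊆ H + K` for every subspace `K` of `E`. -/
def IsQuasiIdealIn (b : L →ₗ[F] L →ₗ[F] L) (H E : Submodule F L) : Prop :=
  H ≤ E ∧ ∀ K : Submodule F L, K ≤ E → bspan b H K ⊔ bspan b K H ≤ H ⊔ K

/-- `H` is an `m`-step subquasi-ideal of `L`: there is a chain of subalgebras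
`H = H_m qu H_{m-1} qu ... qu H_0 = L`, each a quasi-ideal of the next.
(Here `C i` is `H_i`.) -/
def IsSubquasiIdealSteps (b : L →ₗ[F] L →ₗ[F] L) (m : ℕ) (H : Submodule F L) : Prop :=
  ∃ C : ℕ → Submodule F L, C 0 = ⊤ ∧ C m = H ∧
    (∀ i ≤ m, IsSubalgebra b (C i)) ∧
    ∀ i < m, IsQuasiIdealIn b (C (i + 1)) (C i)

/-- `H` is a subquasi-ideal of `L` if it is an `m`-step subquasi-ideal for some `m`. -/
def IsSubquasiIdeal (b : L →ₗ[F] L →ₗ[F] L) (H : Submodule F L) : Prop :=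
  ∃ m : ℕ, IsSubquasiIdealSteps b m H

/-- Lower central series: `lowerCentral b K n` is `K^{n+1}` in the paper's notation,
i.e. `K^1 = K`, `K^{k+1} = [K^k, K]`. -/
def lowerCentral (b : L →ₗ[F] L →ₗ[F] L) (K : Submodule F L) : ℕ → Submodule F L
  | 0 => K
  | n + 1 => bspan b (lowerCentral b K n) K

/-- Derived series: `derSeries b H n` is `H^{(n+1)}` in the paper's notation,
i.e. `H^{(1)} = H`, `H^{(k+1)} = [H^{(k)}, H^{(k)}]`. -/
def derSeries (b : L →ₗ[F] L →ₗ[F] L) (H : Submodule F L) : ℕ → Submodule F L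
  | 0 => H
  | n + 1 => bspan b (derSeries b H n) (derSeries b H n)

/-- The core `H_L` of `H`: the sum of all ideals of `L` contained in `H`. -/
def coreOf (b : L →ₗ[F] L →ₗ[F] L) (H : Submodule F L) : Submodule F L :=
  sSup {A : Submodule F L | IsIdeal b A ∧ A ≤ H}

/-- A derivation of the bracket `b`. -/
def IsDerivation (b : L →ₗ[F] L →ₗ[F] L) (d : L →ₗ[F] L) : Prop :=
  ∀ x y : L, d (b x y) = b (d x) y + b x (d y)

/-- `I`: the span of all squares `[x,x]`, `x ∈ L`. -/
def sqSpan (b : L →ₗ[F] L →ₗ[F] L) : Submodule F L :=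
  Submodule.span F {z : L | ∃ x : L, z = b x x}

/-- The centre `Z(L) = {z | [z,x] = [x,z] = 0 for all x}`. -/
def lcenter (b : L →ₗ[F] L →ₗ[F] L) : Submodule F L where
  carrier := {z : L | ∀ x : L, b z x = 0 ∧ b x z = 0}
  zero_mem' := by intro x; simp
  add_mem' := by
    intro y z hy hz x
    obtain ⟨h1, h2⟩ := hy x
    obtain ⟨h3, h4⟩ := hz x
    constructor <;> simp [h1, h2, h3, h4]
  smul_mem' := by
    intro c z hz x
    obtain ⟨h1, h2⟩ := hz x
    constructor <;> simp [h1, h2]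

/-- The centre of a subalgebra `E`, as a subspace of `L`:
`Z(E) = {z ∈ E | [z,x] = [x,z] = 0 for all x ∈ E}`. -/
def centerIn (b : L →ₗ[F] L →ₗ[F] L) (E : Submodule F L) : Submodule F L where
  carrier := {z : L | z ∈ E ∧ ∀ x ∈ E, b z x = 0 ∧ b x z = 0}
  zero_mem' := ⟨E.zero_mem, by intro x _; simp⟩
  add_mem' := by
    intro y z hy hz
    refine ⟨E.add_mem hy.1 hz.1, fun x hx => ?_⟩
    obtain ⟨h1, h2⟩ := hy.2 x hx
    obtain ⟨h3, h4⟩ := hz.2 x hx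
    constructor <;> simp [h1, h2, h3, h4]
  smul_mem' := by
    intro c z hz
    refine ⟨E.smul_mem c hz.1, fun x hx => ?_⟩
    obtain ⟨h1, h2⟩ := hz.2 x hx
    constructor <;> simp [h1, h2]

/-- The subalgebra generated by a set `S`. -/
def subalgGen (b : L →ₗ[F] L →ₗ[F] L) (S : Set L) : Submodule F L :=
  sInf {K : Submodule F L | IsSubalgebra b K ∧ S ⊆ K}

/-- `x` is a left Engel element: for each `y` there is `n` with `R_x^n(y) = 0`,
where `R_x(y) = [y,x]`. -/
def IsLeftEngel (b : L →ₗ[F] L →ₗ[F] L) (x : L) : Prop :=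
  ∀ y : L, ∃ n : ℕ, ((b.flip x) ^ n) y = 0

end LeibnizDefs

section Helpers

variable {F L : Type*} [Field F] [AddCommGroup L] [Module F L]

lemma mem_bspan' (b : L →ₗ[F] L →ₗ[F] L) {A C : Submodule F L} {a c : L}
    (ha : a ∈ A) (hc : c ∈ C) : b a c ∈ bspan b A C :=
  Submodule.subset_span ⟨a, ha, c, hc, rfl⟩

lemma bspan_le' (b : L →ₗ[F] L →ₗ[F] L) {A C M : Submodule F L}
    (hm : ∀ a ∈ A, ∀ c ∈ C, b a c ∈ M) : bspan b A C ≤ M :=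
  Submodule.span_le.2 (by rintro z ⟨a, ha, c, hc, rfl⟩; exact hm a ha c hc)

lemma sq_mem' (b : L →ₗ[F] L →ₗ[F] L) (x : L) : b x x ∈ sqSpan b :=
  Submodule.subset_span ⟨x, rfl⟩

lemma sqSpan_le' (b : L →ₗ[F] L →ₗ[F] L) {M : Submodule F L}
    (hM : ∀ x : L, b x x ∈ M) : sqSpan b ≤ M :=
  Submodule.span_le.2 (by rintro z ⟨u, rfl⟩; exact hM u)

lemma right_sq_zero' (b : L →ₗ[F] L →ₗ[F] L) (hb : IsLeibniz b)
    (x y : L) (hy : y ∈ sqSpan b) : b x y = 0 := by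
  have hle : sqSpan b ≤ LinearMap.ker (b x) := sqSpan_le' b (fun u => by
    rw [LinearMap.mem_ker, hb x u u, sub_self])
  simpa using hle hy

lemma symm_mem' (b : L →ₗ[F] L →ₗ[F] L) (x y : L) : b x y + b y x ∈ sqSpan b := by
  have hxy := sq_mem' b (x + y)
  have e : b x y + b y x = b (x + y) (x + y) - b x x - b y y := by
    simp only [map_add, LinearMap.add_apply]
    abel
  rw [e]
  exact sub_mem (sub_mem hxy (sq_mem' b x)) (sq_mem' b y)

lemma quasi_single' (b : L →ₗ[F] L →ₗ[F] L)
    (hq : ∀ H : Submodule F L, IsSubalgebra b H → IsQuasiIdeal b H)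
    {e : L} (he : b e e = 0) (y : L) :
    (∃ α β : F, b e y = α • e + β • y) ∧ (∃ α β : F, b y e = α • e + β • y) := by
  have hsub : IsSubalgebra b (Submodule.span F {e}) := by
    apply bspan_le'
    intro a ha c hc
    obtain ⟨σ, rfl⟩ := Submodule.mem_span_singleton.mp ha
    obtain ⟨ρ, rfl⟩ := Submodule.mem_span_singleton.mp hc
    simp only [map_smul, LinearMap.smul_apply, he, smul_zero]
    exact zero_mem _
  have key := hq _ hsub (Submodule.span F {y})
  constructor
  · have hm : b e y ∈ Submodule.span F {e} ⊔ Submodule.span F {y} :=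
      key (Submodule.mem_sup_left
        (mem_bspan' b (Submodule.mem_span_singleton_self e) (Submodule.mem_span_singleton_self y)))
    obtain ⟨u, hu, v, hv, huv⟩ := Submodule.mem_sup.mp hm
    obtain ⟨α, rfl⟩ := Submodule.mem_span_singleton.mp hu
    obtain ⟨β, rfl⟩ := Submodule.mem_span_singleton.mp hv
    exact ⟨α, β, huv.symm⟩
  · have hm : b y e ∈ Submodule.span F {e} ⊔ Submodule.span F {y} :=
      key (Submodule.mem_sup_right
        (mem_bspan' b (Submodule.mem_span_singleton_self y) (Submodule.mem_span_singleton_self e)))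
    obtain ⟨u, hu, v, hv, huv⟩ := Submodule.mem_sup.mp hm
    obtain ⟨α, rfl⟩ := Submodule.mem_span_singleton.mp hu
    obtain ⟨β, rfl⟩ := Submodule.mem_span_singleton.mp hv
    exact ⟨α, β, huv.symm⟩

lemma quasi_pair' (b : L →ₗ[F] L →ₗ[F] L)
    (hq : ∀ H : Submodule F L, IsSubalgebra b H → IsQuasiIdeal b H)
    {e f : L} (hsub : IsSubalgebra b (Submodule.span F {e, f})) (y : L) :
    ∃ α β γ : F, b e y = α • e + β • f + γ • y := by
  have key := hq _ hsub (Submodule.span F {y})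
  have hm : b e y ∈ Submodule.span F {e, f} ⊔ Submodule.span F {y} :=
    key (Submodule.mem_sup_left
      (mem_bspan' b (Submodule.subset_span (Set.mem_insert e {f}))
        (Submodule.mem_span_singleton_self y)))
  obtain ⟨u, hu, v, hv, huv⟩ := Submodule.mem_sup.mp hm
  obtain ⟨α, β, rfl⟩ := Submodule.mem_span_pair.mp hu
  obtain ⟨γ, rfl⟩ := Submodule.mem_span_singleton.mp hv
  exact ⟨α, β, γ, huv.symm⟩

lemma mem_lcenter' (b : L →ₗ[F] L →ₗ[F] L) {z : L} :
    z ∈ lcenter b ↔ ∀ x : L, b z x = 0 ∧ b x z = 0 := Iff.rfl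

end Helpers

variable {F L : Type*} [Field F] [AddCommGroup L] [Module F L]

/-- If every subalgebra of `L` is a quasi-ideal, `I ≠ 0` and `L/I`
is almost abelian, then `I ⊆ Z(L)`, `F` has characteristic 2 with a non-square,
`Z(L) = Fz` is one-dimensional and `L = C ∔ Fz ∔ Fh` with the indicated products. -/
theorem structure_of_LI_almost_abelian (b : L →ₗ[F] L →ₗ[F] L) (hb : IsLeibniz b)
    (hq : ∀ H : Submodule F L, IsSubalgebra b H → IsQuasiIdeal b H)
    (hI : sqSpan b ≠ ⊥)
    (B : Submodule F L) (hBideal : IsIdeal b B) (hIB : sqSpan b ≤ B)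
    (hBne : B ≠ sqSpan b) (hBB : bspan b B B ≤ sqSpan b)
    (h : L) (hhB : h ∉ B) (hspan : B ⊔ Submodule.span F {h} = ⊤)
    (hbh : ∀ x ∈ B, b x h - x ∈ sqSpan b) :
    -- (i) I ⊆ Z(L)
    sqSpan b ≤ lcenter b ∧
    -- (ii) char F = 2, F has a non-square, and L has the indicated structure
    ringChar F = 2 ∧ (∃ α : F, ∀ β : F, β ^ 2 ≠ α) ∧
    (∃ z : L, z ≠ 0 ∧ lcenter b = Submodule.span F {z} ∧ b h h = z ∧
      ∃ C : Submodule F L,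
        C ⊔ Submodule.span F {z} ⊔ Submodule.span F {h} = ⊤ ∧
        (∀ c ∈ C, ∀ α β : F, c + α • z + β • h = 0 → c = 0 ∧ α = 0 ∧ β = 0) ∧
        (∀ c ∈ C, ∀ c' ∈ C, b c c' = b c' c ∧ b c c' ∈ Submodule.span F {z}) ∧
        (∀ c ∈ C, c ≠ 0 → ∃ l : F, b c c = l • z ∧ ∀ α : F, α ^ 2 ≠ l) ∧
        (∀ c ∈ C, b c h = c ∧ b h c = c)) := by
  -- basic consequences
  have hsq : ∀ x : L, b x x ∈ sqSpan b := sq_mem' b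
  have hR0 : ∀ x y : L, y ∈ sqSpan b → b x y = 0 := right_sq_zero' b hb
  have hBmem : ∀ x ∈ B, ∀ y ∈ B, b x y ∈ sqSpan b := fun x hx y hy => hBB (mem_bspan' b hx hy)
  have hhB' : ∀ γ : F, γ • h ∈ B → γ = 0 := by
    intro γ hγ
    by_contra hne
    exact hhB (by simpa [smul_smul, inv_mul_cancel₀ hne] using B.smul_mem γ⁻¹ hγ)
  have hdec : ∀ x : L, ∃ d ∈ B, ∃ γ : F, x = d + γ • h := by
    intro x
    have hx : x ∈ B ⊔ Submodule.span F {h} := by rw [hspan]; exact Submodule.mem_top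
    obtain ⟨d, hd, m, hm, hdm⟩ := Submodule.mem_sup.mp hx
    obtain ⟨γ, rfl⟩ := Submodule.mem_span_singleton.mp hm
    exact ⟨d, hd, γ, hdm.symm⟩
  have hu : ∀ x ∈ B, b h x + x ∈ sqSpan b := by
    intro x hx
    have e : b h x + x = (b x h + b h x) - (b x h - x) := by abel
    rw [e]
    exact sub_mem (symm_mem' b x h) (hbh x hx)
  have hhxB : ∀ x ∈ B, b h x ∈ B := by
    intro x hx
    have e : b h x = (b h x + x) - x := by abel
    rw [e]
    exact sub_mem (hIB (hu x hx)) hx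
  have hxhB : ∀ x ∈ B, b x h ∈ B := by
    intro x hx
    have e : b x h = (b x h - x) + x := by abel
    rw [e]
    exact add_mem (hIB (hbh x hx)) hx
  -- [I, B] = 0
  have hIB0 : ∀ a ∈ sqSpan b, ∀ c ∈ B, b a c = 0 := by
    have hscal : ∀ c ∈ B, c ∉ sqSpan b → ∀ a ∈ sqSpan b, ∃ α : F, b a c = α • a := by
      intro c hcB hcI a ha
      obtain ⟨α, β, hαβ⟩ := (quasi_single' b hq (hR0 a a ha) c).1
      refine ⟨α, ?_⟩
      by_cases hβ : β = 0
      · simpa [hβ] using hαβ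
      · exfalso
        apply hcI
        have h1 : β • c = b a c - α • a := by rw [hαβ]; abel
        have h2 : β • c ∈ sqSpan b :=
          h1 ▸ sub_mem (hBB (mem_bspan' b (hIB ha) hcB)) ((sqSpan b).smul_mem α ha)
        simpa [smul_smul, inv_mul_cancel₀ hβ] using (sqSpan b).smul_mem β⁻¹ h2
    have huni : ∀ c ∈ B, c ∉ sqSpan b → ∃ α : F, ∀ a ∈ sqSpan b, b a c = α • a := by
      intro c hcB hcI
      obtain ⟨a₀, ha₀, ha₀ne⟩ := (Submodule.ne_bot_iff _).mp hI
      obtain ⟨α, hα⟩ := hscal c hcB hcI a₀ ha₀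
      refine ⟨α, ?_⟩
      intro a ha
      by_cases hzero : a = 0
      · simp [hzero]
      obtain ⟨β, hβ⟩ := hscal c hcB hcI a ha
      by_cases hdep : ∃ l : F, a = l • a₀
      · obtain ⟨l, rfl⟩ := hdep
        rw [map_smul, LinearMap.smul_apply, hα, smul_comm]
      · obtain ⟨σ, hσ⟩ := hscal c hcB hcI (a + a₀) (add_mem ha ha₀)
        rw [map_add, LinearMap.add_apply, hβ, hα, smul_add] at hσ
        have hkey : (β - σ) • a = (σ - α) • a₀ := by
          rw [sub_smul, sub_smul, sub_eq_sub_iff_add_eq_add, hσ]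
          abel
        by_cases hβσ : β - σ = 0
        · have hσα : σ - α = 0 := by
            rw [hβσ, zero_smul] at hkey
            rcases smul_eq_zero.mp hkey.symm with h1 | h1
            · exact h1
            · exact absurd h1 ha₀ne
          have e1 : β = σ := sub_eq_zero.mp hβσ
          have e2 : σ = α := sub_eq_zero.mp hσα
          rw [hβ, e1, e2]
        · exfalso
          apply hdep
          refine ⟨(β - σ)⁻¹ * (σ - α), ?_⟩
          rw [← smul_smul, ← hkey, smul_smul, inv_mul_cancel₀ hβσ, one_smul]
    intro a ha c hc
    by_cases hcI : c ∈ sqSpan b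
    · exact hR0 a c hcI
    · obtain ⟨α, hα⟩ := huni c hc hcI
      have hahI : b a h ∈ sqSpan b := by
        have e : b a h = (b a h - a) + a := by abel
        rw [e]
        exact add_mem (hbh a (hIB ha)) ha
      have hL := hb a c h
      have e1 : b a (b c h) = b a c := by
        have t : b a (b c h) = b a c + b a (b c h - c) := by rw [map_sub]; abel
        rw [t, hR0 a _ (hbh c hc), add_zero]
      have e2 : b (b a c) h = α • b a h := by
        rw [hα a ha, map_smul, LinearMap.smul_apply]
      have e3 : b (b a h) c = α • b a h := hα _ hahI
      rw [e1, e2, e3, sub_self] at hL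
      exact hL
  -- the master anisotropy lemma
  have master : ∀ e : L, b e e = 0 → e ∈ sqSpan b := by
    intro e he
    by_contra heI
    obtain ⟨a₀, ha₀, ha₀ne⟩ := (Submodule.ne_bot_iff _).mp hI
    obtain ⟨d, hdB, γ, rfl⟩ := hdec e
    by_cases hγ : γ = 0
    · rw [hγ, zero_smul, add_zero] at he heI
      have key1 : ∀ x ∈ B, x ∉ sqSpan b → b x x = 0 → b h x = -x := by
        intro x hxB hxI hxx
        obtain ⟨α, β, hαβ⟩ := (quasi_single' b hq hxx h).2
        have hβ : β = 0 := by
          apply hhB' β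
          have e' : β • h = b h x - α • x := by rw [hαβ]; abel
          rw [e']
          exact sub_mem (hhxB x hxB) (B.smul_mem α hxB)
        rw [hβ, zero_smul, add_zero] at hαβ
        have hmem : (α + 1) • x ∈ sqSpan b := by
          have e' : (α + 1) • x = b h x + x := by rw [hαβ, add_smul, one_smul]
          rw [e']
          exact hu x hxB
        have hα1 : α + 1 = 0 := by
          by_contra hne
          exact hxI (by simpa [smul_smul, inv_mul_cancel₀ hne]
            using (sqSpan b).smul_mem (α + 1)⁻¹ hmem)
        have hα' : α = -1 := eq_neg_of_add_eq_zero_left hα1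
        rw [hαβ, hα', neg_smul, one_smul]
      have hd0 := key1 d hdB heI he
      apply ha₀ne
      have hdaB : d + a₀ ∈ B := add_mem hdB (hIB ha₀)
      have hdaI : d + a₀ ∉ sqSpan b := fun hmem => heI (by simpa using sub_mem hmem ha₀)
      have hdd : b (d + a₀) (d + a₀) = 0 := by
        simp only [map_add, LinearMap.add_apply]
        rw [he, hR0 d a₀ ha₀, hIB0 a₀ ha₀ d hdB, hR0 a₀ a₀ ha₀]
        simp
      have hkey := key1 (d + a₀) hdaB hdaI hdd
      rw [map_add, hR0 h a₀ ha₀, add_zero, hd0] at hkey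
      have : d = d + a₀ := neg_injective hkey
      exact (left_eq_add.mp this)
    · have key2 : ∀ c ∈ B, c ∉ sqSpan b → b d c + γ • (b h c + c) = 0 := by
        intro c hcB hcI
        obtain ⟨κ, β, hκβ⟩ := (quasi_single' b hq he c).1
        have hbec : b (d + γ • h) c = b d c + γ • b h c := by
          rw [map_add, LinearMap.add_apply, map_smul, LinearMap.smul_apply]
        have hκ : κ = 0 := by
          have e' : (κ * γ) • h = b (d + γ • h) c - κ • d - β • c := by
            rw [hκβ, smul_add, smul_smul]
            abel
          have hmem : (κ * γ) • h ∈ B := by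
            rw [e']
            refine sub_mem (sub_mem ?_ (B.smul_mem κ hdB)) (B.smul_mem β hcB)
            rw [hbec]
            exact add_mem (hIB (hBmem d hdB c hcB)) (B.smul_mem γ (hhxB c hcB))
          rcases mul_eq_zero.mp (hhB' _ hmem) with h1 | h1
          · exact h1
          · exact absurd h1 hγ
        rw [hκ, zero_smul, zero_add] at hκβ
        have hsum : b d c + γ • b h c = β • c := by rw [← hbec, hκβ]
        have hmain : b d c + γ • (b h c + c) = (β + γ) • c := by
          rw [smul_add, ← add_assoc, hsum, add_smul]
        have hmemI : (β + γ) • c ∈ sqSpan b := by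
          rw [← hmain]
          exact add_mem (hBmem d hdB c hcB) ((sqSpan b).smul_mem γ (hu c hcB))
        have hβγ : β + γ = 0 := by
          by_contra hne
          exact hcI (by simpa [smul_smul, inv_mul_cancel₀ hne]
            using (sqSpan b).smul_mem (β + γ)⁻¹ hmemI)
        rw [hmain, hβγ, zero_smul]
      obtain ⟨c₀, hc₀B, hc₀I⟩ := SetLike.exists_of_lt (lt_of_le_of_ne hIB (Ne.symm hBne))
      apply ha₀ne
      have k1 := key2 c₀ hc₀B hc₀I
      have hcaB : c₀ + a₀ ∈ B := add_mem hc₀B (hIB ha₀)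
      have hcaI : c₀ + a₀ ∉ sqSpan b := fun hmem => hc₀I (by simpa using sub_mem hmem ha₀)
      have k2 := key2 (c₀ + a₀) hcaB hcaI
      have e2 : b d (c₀ + a₀) = b d c₀ := by rw [map_add, hR0 d a₀ ha₀, add_zero]
      have e3 : b h (c₀ + a₀) = b h c₀ := by rw [map_add, hR0 h a₀ ha₀, add_zero]
      rw [e2, e3] at k2
      have hγa : γ • a₀ = (b d c₀ + γ • (b h c₀ + (c₀ + a₀))) - (b d c₀ + γ • (b h c₀ + c₀)) := by
        rw [smul_add, smul_add, smul_add]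
        abel
      rw [k1, k2, zero_sub, neg_zero] at hγa
      rcases smul_eq_zero.mp hγa with h1 | h1
      · exact absurd h1 hγ
      · exact h1
  have hhI : h ∉ sqSpan b := fun hmem => hhB (hIB hmem)
  set w := b h h with hwdef
  have hwI : w ∈ sqSpan b := by rw [hwdef]; exact hsq h
  have hwne : w ≠ 0 := by
    intro h0
    exact hhI (master h (hwdef.symm.trans h0))
  have hbww : b w w = 0 := hR0 w w hwI
  have hbhw : b h w = 0 := hR0 h w hwI
  obtain ⟨τ, hbwh⟩ : ∃ τ : F, b w h = τ • w := by
    obtain ⟨α, β, hαβ⟩ := (quasi_single' b hq hbww h).1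
    refine ⟨α, ?_⟩
    have hβ : β = 0 := by
      apply hhB' β
      have e' : β • h = b w h - α • w := by rw [hαβ]; abel
      rw [e']
      exact sub_mem (hxhB w (hIB hwI)) (B.smul_mem α (hIB hwI))
    rw [hαβ, hβ, zero_smul, add_zero]
  -- I = span {w}
  have hsubHW : IsSubalgebra b (Submodule.span F {h, w}) := by
    apply bspan_le'
    intro x hx y hy
    obtain ⟨σ, ρ, hx'⟩ := Submodule.mem_span_pair.mp hx
    obtain ⟨σ', ρ', hy'⟩ := Submodule.mem_span_pair.mp hy
    rw [← hx', ← hy']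
    have hwmem : w ∈ Submodule.span F {h, w} :=
      Submodule.subset_span (Set.mem_insert_iff.mpr (Or.inr rfl))
    have e' : b (σ • h + ρ • w) (σ' • h + ρ' • w)
        = (σ * σ') • b h h + (σ * ρ') • b h w + ((ρ * σ') • b w h + (ρ * ρ') • b w w) := by
      simp only [map_add, map_smul, LinearMap.add_apply, LinearMap.smul_apply]
      module
    rw [e', ← hwdef, hbhw, hbww, hbwh, smul_zero, smul_zero, add_zero, add_zero, smul_smul]
    exact add_mem (Submodule.smul_mem _ _ hwmem) (Submodule.smul_mem _ _ hwmem)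
  have huw : ∀ c ∈ B, c ∉ sqSpan b → b h c + c ∈ Submodule.span F {w} := by
    intro c hcB hcI
    obtain ⟨α, β, γ', hdecomp⟩ := quasi_pair' b hq hsubHW c
    have hα : α = 0 := by
      apply hhB' α
      have e' : α • h = b h c - β • w - γ' • c := by rw [hdecomp]; abel
      rw [e']
      exact sub_mem (sub_mem (hhxB c hcB) (B.smul_mem β (hIB hwI))) (B.smul_mem γ' hcB)
    rw [hα, zero_smul, zero_add] at hdecomp
    have hmain : b h c + c = β • w + (γ' + 1) • c := by
      rw [hdecomp, add_smul, one_smul]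
      abel
    have hγ'1 : γ' + 1 = 0 := by
      by_contra hne
      apply hcI
      have hmem : (γ' + 1) • c ∈ sqSpan b := by
        have e' : (γ' + 1) • c = (b h c + c) - β • w := by rw [hmain]; abel
        rw [e']
        exact sub_mem (hu c hcB) ((sqSpan b).smul_mem β hwI)
      simpa [smul_smul, inv_mul_cancel₀ hne] using (sqSpan b).smul_mem (γ' + 1)⁻¹ hmem
    rw [hmain, hγ'1, zero_smul, add_zero]
    exact Submodule.smul_mem _ _ (Submodule.mem_span_singleton_self w)
  obtain ⟨c₀, hc₀B, hc₀I⟩ := SetLike.exists_of_lt (lt_of_le_of_ne hIB (Ne.symm hBne))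
  have hIw : sqSpan b = Submodule.span F {w} := by
    apply le_antisymm
    · intro a ha
      have k1 := huw c₀ hc₀B hc₀I
      have hcaB : c₀ + a ∈ B := add_mem hc₀B (hIB ha)
      have hcaI : c₀ + a ∉ sqSpan b := fun hmem => hc₀I (by simpa using sub_mem hmem ha)
      have k2 := huw (c₀ + a) hcaB hcaI
      rw [map_add, hR0 h a ha, add_zero] at k2
      have e' : a = (b h c₀ + (c₀ + a)) - (b h c₀ + c₀) := by abel
      rw [e']
      exact sub_mem k2 k1
    · rw [Submodule.span_le, Set.singleton_subset_iff]
      exact hwI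
  have hah : ∀ a ∈ sqSpan b, b a h = τ • a := by
    intro a ha
    rw [hIw] at ha
    obtain ⟨l, rfl⟩ := Submodule.mem_span_singleton.mp ha
    rw [map_smul, LinearMap.smul_apply, hbwh, smul_comm]
  -- τ = 2
  have hcc₀ : b c₀ c₀ ≠ 0 := fun h0 => hc₀I (master c₀ h0)
  have hccI : b c₀ c₀ ∈ sqSpan b := hBmem c₀ hc₀B c₀ hc₀B
  have hτ2 : τ = 2 := by
    have hL := hb c₀ c₀ h
    have e1 : b c₀ (b c₀ h) = b c₀ c₀ := by
      have t : b c₀ (b c₀ h) = b c₀ c₀ + b c₀ (b c₀ h - c₀) := by rw [map_sub]; abel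
      rw [t, hR0 _ _ (hbh c₀ hc₀B), add_zero]
    have e2 : b (b c₀ c₀) h = τ • b c₀ c₀ := hah _ hccI
    have e3 : b (b c₀ h) c₀ = b c₀ c₀ := by
      have t : b (b c₀ h) c₀ = b c₀ c₀ + b (b c₀ h - c₀) c₀ := by
        rw [map_sub, LinearMap.sub_apply]
        abel
      rw [t, hIB0 _ (hbh c₀ hc₀B) c₀ hc₀B, add_zero]
    rw [e1, e2, e3] at hL
    have h2v : b c₀ c₀ + b c₀ c₀ = τ • b c₀ c₀ := eq_sub_iff_add_eq.mp hL
    have hz : (τ - 2) • b c₀ c₀ = 0 := by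
      rw [sub_smul, ← h2v, two_smul, sub_self]
    rcases smul_eq_zero.mp hz with h1 | h1
    · exact sub_eq_zero.mp h1
    · exact absurd h1 hcc₀
  -- characteristic 2
  have htwo : (2 : F) = 0 := by
    have hee : b (w - (2 : F) • h) (w - (2 : F) • h) = 0 := by
      have e' : b (w - (2 : F) • h) (w - (2 : F) • h)
          = b w w - (2 : F) • b w h - ((2 : F) • b h w - ((2 : F) * (2 : F)) • b h h) := by
        simp only [map_sub, map_smul, LinearMap.sub_apply, LinearMap.smul_apply]
        module
      rw [e', ← hwdef, hbww, hbhw, hbwh, hτ2]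
      module
    have heeI := master _ hee
    apply hhB' 2
    have e' : (2 : F) • h = w - (w - (2 : F) • h) := by abel
    rw [e']
    exact sub_mem (hIB hwI) (hIB heeI)
  have hchar : ringChar F = 2 := by
    have h2 : ((2 : ℕ) : F) = 0 := by exact_mod_cast htwo
    exact CharP.ringChar_of_prime_eq_zero Nat.prime_two h2
  have hadd0 : ∀ v : L, v + v = 0 := by
    intro v
    rw [← two_smul F v, htwo, zero_smul]
  have hneg : ∀ v : L, -v = v := fun v => neg_eq_of_add_eq_zero_left (hadd0 v)
  have hτ0 : τ = 0 := by rw [hτ2, htwo]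
  have hbwh0 : b w h = 0 := by rw [hbwh, hτ0, zero_smul]
  have hah0 : ∀ a ∈ sqSpan b, b a h = 0 := by
    intro a ha
    rw [hah a ha, hτ0, zero_smul]
  -- (i) I ≤ Z(L)
  have hIcent : sqSpan b ≤ lcenter b := by
    intro a ha
    rw [mem_lcenter' b]
    intro x
    refine ⟨?_, hR0 x a ha⟩
    obtain ⟨d, hdB, γ, rfl⟩ := hdec x
    rw [map_add, map_smul, hIB0 a ha d hdB, hah0 a ha, smul_zero, add_zero]
  -- Z(L) = span {w}
  have hZ : lcenter b = Submodule.span F {w} := by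
    apply le_antisymm
    · intro y hy
      have hy' : ∀ x : L, b y x = 0 ∧ b x y = 0 := (mem_lcenter' b).mp hy
      obtain ⟨d, hdB, γ, rfl⟩ := hdec y
      have h1 : b (d + γ • h) h = 0 := (hy' h).1
      have h1' : b d h + γ • b h h = 0 := by
        rw [← h1, map_add, LinearMap.add_apply, map_smul, LinearMap.smul_apply]
      have hdI : d ∈ sqSpan b := by
        have e' : d = -(b d h - d) - γ • b h h + (b d h + γ • b h h) := by abel
        rw [h1', add_zero] at e'
        rw [e']
        exact sub_mem (neg_mem (hbh d hdB)) ((sqSpan b).smul_mem γ (hsq h))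
      have h2 : b h (d + γ • h) = 0 := (hy' h).2
      rw [map_add, map_smul, hR0 h d hdI, zero_add] at h2
      have hγ0 : γ = 0 := by
        rcases smul_eq_zero.mp h2 with h1'' | h1''
        · exact h1''
        · exact absurd (hwdef.trans h1'') hwne
      rw [hγ0, zero_smul, add_zero]
      rw [← hIw]
      exact hdI
    · rw [Submodule.span_le, Set.singleton_subset_iff]
      exact hIcent hwI
  -- [h,x] = [x,h] on B
  have hhx : ∀ x ∈ B, b h x = b x h := by
    intro x hx
    have hL := hb h x h
    have e1 : b h (b x h) = b h x := by
      have t : b h (b x h) = b h x + b h (b x h - x) := by rw [map_sub]; abel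
      rw [t, hR0 _ _ (hbh x hx), add_zero]
    have e2 : b (b h x) h = -b x h := by
      have t : b (b h x + x) h = b (b h x) h + b x h := by rw [map_add, LinearMap.add_apply]
      have t2 : b (b h x + x) h = 0 := hah0 _ (hu x hx)
      rw [t2] at t
      exact eq_neg_of_add_eq_zero_left t.symm
    have e3 : b (b h h) x = 0 := hIB0 _ (hsq h) x hx
    rw [e1, e2, e3, sub_zero] at hL
    rw [hL, hneg]
  -- symmetry on B
  have hsymB : ∀ x ∈ B, ∀ y ∈ B, b x y = b y x := by
    intro x hx y hy
    have hL := hb h x y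
    have e1 : b h (b x y) = 0 := hR0 _ _ (hBmem x hx y hy)
    have e2 : b (b h x) y = b x y := by
      rw [hhx x hx]
      have t : b (b x h) y = b x y + b (b x h - x) y := by
        rw [map_sub, LinearMap.sub_apply]
        abel
      rw [t, hIB0 _ (hbh x hx) y hy, add_zero]
    have e3 : b (b h y) x = b y x := by
      rw [hhx y hy]
      have t : b (b y h) x = b y x + b (b y h - y) x := by
        rw [map_sub, LinearMap.sub_apply]
        abel
      rw [t, hIB0 _ (hbh y hy) x hx, add_zero]
    rw [e1, e2, e3] at hL
    exact sub_eq_zero.mp hL.symm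
  -- the complement C
  set C := B ⊓ LinearMap.ker (LinearMap.flip b h - LinearMap.id) with hCdef
  have hCmem : ∀ x : L, x ∈ C ↔ x ∈ B ∧ b x h = x := by
    intro x
    rw [hCdef, Submodule.mem_inf, LinearMap.mem_ker, LinearMap.sub_apply, LinearMap.flip_apply,
      LinearMap.id_apply, sub_eq_zero]
  have hxiC : ∀ x ∈ B, ∃ ξ : F, x + ξ • w ∈ C ∧ x = (x + ξ • w) + ξ • w := by
    intro x hx
    have hmem : b x h - x ∈ Submodule.span F {w} := by
      rw [← hIw]
      exact hbh x hx
    obtain ⟨ξ, hξ⟩ := Submodule.mem_span_singleton.mp hmem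
    refine ⟨ξ, (hCmem _).mpr ⟨add_mem hx (B.smul_mem ξ (hIB hwI)), ?_⟩, ?_⟩
    · rw [map_add, LinearMap.add_apply, map_smul, LinearMap.smul_apply, hbwh0, smul_zero,
        add_zero, hξ]
      abel
    · have e' : (x + ξ • w) + ξ • w = x + (ξ • w + ξ • w) := by abel
      rw [e', hadd0, add_zero]
  have hBle : B ≤ C ⊔ Submodule.span F {w} := by
    intro x hx
    obtain ⟨ξ, hmem, he'⟩ := hxiC x hx
    rw [he']
    exact add_mem (Submodule.mem_sup_left hmem)
      (Submodule.mem_sup_right (Submodule.smul_mem _ _ (Submodule.mem_span_singleton_self w)))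
  have htop : C ⊔ Submodule.span F {w} ⊔ Submodule.span F {h} = ⊤ := by
    rw [eq_top_iff, ← hspan]
    exact sup_le (le_trans hBle le_sup_left) le_sup_right
  -- nonzero element of C
  obtain ⟨ξ₀, hc₁C, _⟩ := hxiC c₀ hc₀B
  have hc₁ne : c₀ + ξ₀ • w ≠ 0 := by
    intro h0
    apply hc₀I
    have e' : c₀ = (c₀ + ξ₀ • w) - ξ₀ • w := by abel
    rw [h0, zero_sub] at e'
    rw [e']
    exact neg_mem ((sqSpan b).smul_mem ξ₀ hwI)
  -- squares of elements of C are non-squares of F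
  have hsqC : ∀ c, c ∈ C → c ≠ 0 → ∃ l : F, b c c = l • w ∧ ∀ α : F, α ^ 2 ≠ l := by
    intro c hcC hcne
    obtain ⟨hcB, hch⟩ := (hCmem c).mp hcC
    have hmem : b c c ∈ Submodule.span F {w} := by
      rw [← hIw]
      exact hBmem c hcB c hcB
    obtain ⟨l, hl⟩ := Submodule.mem_span_singleton.mp hmem
    refine ⟨l, hl.symm, ?_⟩
    intro α hα
    have hhc : b h c = c := by rw [hhx c hcB, hch]
    have hee : b (c + α • h) (c + α • h) = 0 := by
      have exp : b (c + α • h) (c + α • h)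
          = b c c + α • b c h + (α • b h c + (α * α) • b h h) := by
        simp only [map_add, map_smul, LinearMap.add_apply, LinearMap.smul_apply]
        module
      have hαα : α * α = l := by rw [← hα]; ring
      rw [exp, hch, hhc, ← hl, ← hwdef, hαα]
      have e' : l • w + α • c + (α • c + l • w) = (l • w + l • w) + (α • c + α • c) := by abel
      rw [e', hadd0, hadd0, add_zero]
    have heI := master _ hee
    have hα0 : α = 0 := by
      apply hhB' α
      have e' : α • h = (c + α • h) - c := by abel
      rw [e']
      exact sub_mem (hIB heI) hcB
    rw [hα0, zero_smul, add_zero, hIw] at heI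
    obtain ⟨m, hm⟩ := Submodule.mem_span_singleton.mp heI
    apply hcne
    rw [← hch, ← hm, map_smul, LinearMap.smul_apply, hbwh0, smul_zero]
  obtain ⟨l₁, _, hl₁ns⟩ := hsqC _ hc₁C hc₁ne
  -- assemble
  refine ⟨hIcent, hchar, ⟨l₁, hl₁ns⟩, w, hwne, hZ, hwdef.symm, C, htop, ?_, ?_, ?_, ?_⟩
  · -- independence
    intro c hcC α β heq
    obtain ⟨hcB, hch⟩ := (hCmem c).mp hcC
    have hβ : β = 0 := by
      apply hhB' β
      have e' : β • h = (c + α • w + β • h) - (c + α • w) := by abel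
      rw [heq, zero_sub] at e'
      rw [e']
      exact neg_mem (add_mem hcB (B.smul_mem α (hIB hwI)))
    rw [hβ, zero_smul, add_zero] at heq
    have hc0 : c = 0 := by
      have e' : b (c + α • w) h = 0 := by rw [heq]; simp
      rw [map_add, LinearMap.add_apply, map_smul, LinearMap.smul_apply, hch, hbwh0, smul_zero,
        add_zero] at e'
      exact e'
    rw [hc0, zero_add] at heq
    have hα : α = 0 := by
      rcases smul_eq_zero.mp heq with h1 | h1
      · exact h1
      · exact absurd h1 hwne
    exact ⟨hc0, hα, hβ⟩
  · -- products
    intro c hcC c' hc'C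
    have hcB := ((hCmem c).mp hcC).1
    have hc'B := ((hCmem c').mp hc'C).1
    refine ⟨hsymB c hcB c' hc'B, ?_⟩
    rw [← hIw]
    exact hBmem c hcB c' hc'B
  · -- non-square squares
    exact fun c hcC hcne => hsqC c hcC hcne
  · -- action of h
    intro c hcC
    obtain ⟨hcB, hch⟩ := (hCmem c).mp hcC
    exact ⟨hch, by rw [hhx c hcB, hch]⟩
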